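/- arXiv:1205.0097 — 2 statements merged into one kernel-verified Lean document; each statement's English description precedes it below -/
import Mathlib

section
/- Let k be real, let {φ_V : V ∈ Γ} be a parabolic cocycle of weight −k in 𝒫 with φ_S = 0, let k' be a positive even integer, and let w be a multiplier system of weight k' for Γ satisfying |w(V)| ≤ K μ(V)^α for all V ∈ Γ, where μ(V) = a²+b²+c²+d². Let Θ be a complete set of representatives of the right cosets of Γ_∞ in Γ, and suppose the cocycle estimate holds: there exist constants K₁* > 0 and e > 0 (with η = 6e − 2k) such that |φ_V(z) · conj(w(V)) · (cz+d)^{−k'}| ≤ K₁*(c²+d²)^{e+1+α−k'/2}(|z|^η + y^{−η}) for all V = (a b; c d) ∈ Θ and all z = x+iy ∈ ℍ. Then for k' > ψ := 2e + 4 + 2α the generalized Poincaré series Ψ(z) = Σ_{V∈Θ} φ_V(z) · conj(w(V)) · (cz+d)^{−k'} converges absolutely for every z ∈ ℍ, and Ψ ∈ 𝒫, i.e., Ψ is holomorphic on ℍ and satisfies |Ψ(z)| < K'(|z|^{ρ'} + y^{−σ'}) for some positive constants K', ρ', σ'. -/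
open Complex ComplexConjugate

noncomputable section

abbrev SL2Z := Matrix.SpecialLinearGroup (Fin 2) ℤ

/-- The (i,j) entry of an element of SL(2,ℤ). -/
def entry (M : SL2Z) (i j : Fin 2) : ℤ := (M : Matrix (Fin 2) (Fin 2) ℤ) i j

/-- The argument of a complex number, normalized to lie in [-π, π). -/
def parg (w : ℂ) : ℝ := if Complex.arg w = Real.pi then -Real.pi else Complex.arg w

/-- The principal power `w^k = |w|^k e^{i k arg w}`, with `-π ≤ arg w < π`. -/
def ppow (w : ℂ) (k : ℝ) : ℂ :=
  ((‖w‖ ^ k : ℝ) : ℂ) * Complex.exp (Complex.I * (k : ℂ) * (parg w : ℂ))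

/-- `cz + d`, for the bottom row (c, d) of M. -/
def denom (M : SL2Z) (z : ℂ) : ℂ := (entry M 1 0 : ℂ) * z + (entry M 1 1 : ℂ)

/-- The Möbius action `Mz = (az+b)/(cz+d)`. -/
def moeb (M : SL2Z) (z : ℂ) : ℂ :=
  ((entry M 0 0 : ℂ) * z + (entry M 0 1 : ℂ)) / denom M z

/-- `μ(V) = a² + b² + c² + d²`. -/
def muSL (M : SL2Z) : ℤ :=
  (entry M 0 0) ^ 2 + (entry M 0 1) ^ 2 + (entry M 1 0) ^ 2 + (entry M 1 1) ^ 2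

/-- A multiplier system of weight `k` for `Γ`: nonvanishing and the consistency condition
`v(M₁M₂)(c₃z+d₃)^k = v(M₁)v(M₂)(c₁M₂z+d₁)^k(c₂z+d₂)^k` on the upper half-plane. -/
def IsMultiplier (Γ : Subgroup SL2Z) (k : ℝ) (v : Γ → ℂ) : Prop :=
  (∀ M : Γ, v M ≠ 0) ∧
  ∀ M₁ M₂ : Γ, ∀ z : ℂ, 0 < z.im →
    v (M₁ * M₂) * ppow (denom ((M₁ * M₂ : Γ) : SL2Z) z) k =
      v M₁ * v M₂ * ppow (denom (M₁ : SL2Z) (moeb (M₂ : SL2Z) z)) k *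
        ppow (denom (M₂ : SL2Z) z) k

/-- A parabolic element of SL(2,ℤ): trace ±2 and not ±I. -/
def IsParabolicMat (M : SL2Z) : Prop :=
  (Matrix.trace (M : Matrix (Fin 2) (Fin 2) ℤ) = 2 ∨
    Matrix.trace (M : Matrix (Fin 2) (Fin 2) ℤ) = -2) ∧
  (M : Matrix (Fin 2) (Fin 2) ℤ) ≠ 1 ∧ (M : Matrix (Fin 2) (Fin 2) ℤ) ≠ -1

/-- `v` is weakly parabolic: `|v(P)| = 1` for all parabolic `P ∈ Γ`. -/
def WeaklyParabolic (Γ : Subgroup SL2Z) (v : Γ → ℂ) : Prop :=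
  ∀ M : Γ, IsParabolicMat (M : SL2Z) → ‖v M‖ = 1

/-- The weight `−k` stroke operator: `(F∣_v^{-k}M)(z) = v(M)⁻¹ (cz+d)^k F(Mz)`. -/
def stroke (Γ : Subgroup SL2Z) (k : ℝ) (v : Γ → ℂ) (F : ℂ → ℂ) (M : Γ) (z : ℂ) : ℂ :=
  (v M)⁻¹ * ppow (denom (M : SL2Z) z) k * F (moeb (M : SL2Z) z)

/-- Membership in the space `𝒫`: holomorphic on ℍ with
`|g(z)| < K(|z|^ρ + y^{−σ})` for some positive constants `K, ρ, σ`. -/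
def MemP (g : ℂ → ℂ) : Prop :=
  (∀ z : ℂ, 0 < z.im → DifferentiableAt ℂ g z) ∧
  ∃ K ρ σ : ℝ, 0 < K ∧ 0 < ρ ∧ 0 < σ ∧
    ∀ z : ℂ, 0 < z.im → ‖g z‖ < K * (‖z‖ ^ ρ + z.im ^ (-σ))

/-- A cocycle of weight `−k` with multiplier `v`, with values in `𝒫`. -/
def IsCocycle (Γ : Subgroup SL2Z) (k : ℝ) (v : Γ → ℂ) (ρ : Γ → ℂ → ℂ) : Prop :=
  (∀ M : Γ, MemP (ρ M)) ∧
  ∀ M₁ M₂ : Γ, ∀ z : ℂ, 0 < z.im →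
    ρ (M₁ * M₂) z = stroke Γ k v (ρ M₁) M₂ z + ρ M₂ z

/-- Parabolicity of a cocycle `ρ` at a parabolic generator `Q`:
`ρ_Q = ρ_h ∣ Q − ρ_h` for some `ρ_h ∈ 𝒫`. -/
def IsParabolicAt (Γ : Subgroup SL2Z) (k : ℝ) (v : Γ → ℂ) (ρ : Γ → ℂ → ℂ) (Q : Γ) : Prop :=
  ∃ g : ℂ → ℂ, MemP g ∧ ∀ z : ℂ, 0 < z.im → ρ Q z = stroke Γ k v g Q z - g z

/-- `M = (1 λ; 0 1)`. -/
def IsTranslationOf (M : SL2Z) (lam : ℤ) : Prop :=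
  entry M 0 0 = 1 ∧ entry M 0 1 = lam ∧ entry M 1 0 = 0 ∧ entry M 1 1 = 1

/-- The generalized Poincaré series `Ψ(z) = Σ_{V∈Θ} φ_V(z) conj(w(V)) (cz+d)^{−k'}`. -/
def poincareSeries (Γ : Subgroup SL2Z) (Θ : Set Γ) (w : Γ → ℂ) (k' : ℝ)
    (φ : Γ → ℂ → ℂ) (z : ℂ) : ℂ :=
  ∑' V : Θ, φ (V : Γ) z * conj (w (V : Γ)) * ppow (denom ((V : Γ) : SL2Z) z) (-k')

/-- The generalized Eisenstein series `g(z) = Σ_{V∈Θ} conj(w(V)) (cz+d)^{−k'}`. -/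
def genEisenstein (Γ : Subgroup SL2Z) (Θ : Set Γ) (w : Γ → ℂ) (k' : ℝ) (z : ℂ) : ℂ :=
  ∑' V : Θ, conj (w (V : Γ)) * ppow (denom ((V : Γ) : SL2Z) z) (-k')


/-! ### Auxiliary lemmas -/

lemma exp_I_parg (w : ℂ) : Complex.exp (Complex.I * parg w) = Complex.exp (w.arg * Complex.I) := by
  unfold parg
  split_ifs with h
  · rw [h]
    push_cast
    rw [mul_comm Complex.I, neg_mul, Complex.exp_neg, Complex.exp_pi_mul_I]
    norm_num
  · ring_nf

lemma ppow_int (w : ℂ) (n : ℤ) : ppow w (n : ℝ) = w ^ n := by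
  unfold ppow
  have h1 : ((‖w‖ ^ (n:ℝ) : ℝ) : ℂ) = ((‖w‖ : ℂ)) ^ n := by
    rw [Real.rpow_intCast]; push_cast; ring
  have h2 : Complex.exp (Complex.I * ((n:ℝ) : ℂ) * (parg w : ℂ)) =
      Complex.exp (Complex.I * parg w) ^ n := by
    rw [← Complex.exp_int_mul]; push_cast; ring_nf
  rw [h1, h2, exp_I_parg, ← mul_zpow, Complex.norm_mul_exp_arg_mul_I]

lemma det_entries (M : SL2Z) : entry M 0 0 * entry M 1 1 - entry M 0 1 * entry M 1 0 = 1 := by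
  have := M.2
  rw [Matrix.det_fin_two] at this
  simpa [entry] using this

lemma row_ne_zero (M : SL2Z) : ¬(entry M 1 0 = 0 ∧ entry M 1 1 = 0) := by
  rintro ⟨h1, h2⟩
  have := det_entries M
  rw [h1, h2] at this
  simp at this

lemma denom_ne_zero (M : SL2Z) (z : ℂ) (hz : 0 < z.im) : denom M z ≠ 0 := by
  intro h
  have him : (entry M 1 0 : ℝ) * z.im = 0 := by
    have := congrArg Complex.im h
    simpa [denom] using this
  have hc : entry M 1 0 = 0 := by
    rcases mul_eq_zero.mp him with h' | h'
    · exact_mod_cast h'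
    · exact absurd h' (ne_of_gt hz)
  have hd : entry M 1 1 = 0 := by
    rw [denom] at h
    rw [hc] at h
    simpa using h
  exact row_ne_zero M ⟨hc, hd⟩

lemma same_row_mul_inv (V W : SL2Z) (hc : entry V 1 0 = entry W 1 0)
    (hd : entry V 1 1 = entry W 1 1) :
    V * W⁻¹ = ModularGroup.T ^ (entry (V * W⁻¹) 0 1) := by
  have hinv := Matrix.SpecialLinearGroup.SL2_inv_expl W
  have hdet := det_entries V
  have hdetW := det_entries W
  simp only [entry] at hc hd hdet hdetW
  have hW : ((W⁻¹ : SL2Z) : Matrix (Fin 2) (Fin 2) ℤ) =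
      !![(W : Matrix (Fin 2) (Fin 2) ℤ) 1 1, -(W : Matrix (Fin 2) (Fin 2) ℤ) 0 1;
         -(W : Matrix (Fin 2) (Fin 2) ℤ) 1 0, (W : Matrix (Fin 2) (Fin 2) ℤ) 0 0] := by
    rw [hinv]; rfl
  have key : ((V * W⁻¹ : SL2Z) : Matrix (Fin 2) (Fin 2) ℤ) =
      !![1, entry (V * W⁻¹) 0 1; 0, 1] := by
    ext i j
    fin_cases i <;> fin_cases j <;>
      simp only [entry, Matrix.SpecialLinearGroup.coe_mul, hW, Matrix.mul_apply,
        Fin.sum_univ_two, Matrix.cons_val_zero, Matrix.cons_val_one, Matrix.head_cons,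
        Matrix.cons_val', Matrix.empty_val', Matrix.cons_val_fin_one, Matrix.head_fin_const,
        Fin.isValue, Fin.zero_eta, Fin.mk_one, Matrix.of_apply]
    · linear_combination hdet - (V : Matrix (Fin 2) (Fin 2) ℤ) 0 0 * hd +
        (V : Matrix (Fin 2) (Fin 2) ℤ) 0 1 * hc
    · linear_combination (V : Matrix (Fin 2) (Fin 2) ℤ) 1 1 * hc -
        (V : Matrix (Fin 2) (Fin 2) ℤ) 1 0 * hd
    · linear_combination hdetW - (W : Matrix (Fin 2) (Fin 2) ℤ) 0 1 * hc +
        (W : Matrix (Fin 2) (Fin 2) ℤ) 0 0 * hd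
  ext i j
  rw [ModularGroup.coe_T_zpow, key]

lemma coe_S_eq_T_pow {Γ : Subgroup SL2Z} (S : Γ) (lam : ℤ)
    (hS : IsTranslationOf (S : SL2Z) lam) : (S : SL2Z) = ModularGroup.T ^ lam := by
  obtain ⟨h1, h2, h3, h4⟩ := hS
  ext i j
  rw [ModularGroup.coe_T_zpow]
  simp only [entry] at h1 h2 h3 h4
  fin_cases i <;> fin_cases j <;> simp_all

lemma card_fiber_le {Γ : Subgroup SL2Z} (S : Γ) (lam : ℤ) (hlam : 0 < lam)
    (hS : IsTranslationOf (S : SL2Z) lam) (Θ : Set Γ)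
    (hΘ : ∀ V : Γ, ∃! W : Γ, W ∈ Θ ∧ V * W⁻¹ ∈ Subgroup.zpowers S)
    (u : Finset Θ) (p : ℤ × ℤ)
    (r : Θ → ℤ × ℤ)
    (hr : ∀ V : Θ, r V = (entry ((V : Γ) : SL2Z) 1 0, entry ((V : Γ) : SL2Z) 1 1)) :
    (u.filter fun V => r V = p).card ≤ lam.toNat := by
  haveI : NeZero lam.toNat := ⟨by omega⟩
  set t := u.filter fun V => r V = p with ht
  rcases t.eq_empty_or_nonempty with h | ⟨W₀, hW₀⟩
  · simp [h]
  · have hrow : ∀ V ∈ t, entry ((V : Γ) : SL2Z) 1 0 = entry (((W₀ : Θ) : Γ) : SL2Z) 1 0 ∧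
        entry ((V : Γ) : SL2Z) 1 1 = entry (((W₀ : Θ) : Γ) : SL2Z) 1 1 := by
      intro V hV
      have h1 : r V = p := (Finset.mem_filter.mp hV).2
      have h2 : r W₀ = p := (Finset.mem_filter.mp hW₀).2
      rw [hr] at h1 h2
      constructor
      · have := congrArg Prod.fst (h1.trans h2.symm); simpa using this
      · have := congrArg Prod.snd (h1.trans h2.symm); simpa using this
    classical
    have : t.card ≤ (Finset.univ : Finset (ZMod lam.toNat)).card := by
      refine Finset.card_le_card_of_injOn
        (fun V => ((entry (((V : Γ) * ((W₀ : Γ))⁻¹ : Γ) : SL2Z) 0 1 : ℤ) : ZMod lam.toNat))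
        (fun _ _ => Finset.mem_univ _) ?_
      intro V₁ hV₁ V₂ hV₂ heq
      obtain ⟨hc1, hd1⟩ := hrow V₁ hV₁
      obtain ⟨hc2, hd2⟩ := hrow V₂ hV₂
      set m₁ := entry (((V₁ : Γ) * ((W₀ : Γ))⁻¹ : Γ) : SL2Z) 0 1 with hm₁
      set m₂ := entry (((V₂ : Γ) * ((W₀ : Γ))⁻¹ : Γ) : SL2Z) 0 1 with hm₂
      have hA1 : (((V₁ : Γ) * ((W₀ : Γ))⁻¹ : Γ) : SL2Z) = ModularGroup.T ^ m₁ := by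
        rw [hm₁]
        exact same_row_mul_inv _ _ hc1 hd1
      have hA2 : (((V₂ : Γ) * ((W₀ : Γ))⁻¹ : Γ) : SL2Z) = ModularGroup.T ^ m₂ := by
        rw [hm₂]
        exact same_row_mul_inv _ _ hc2 hd2
      have hdvd : (lam : ℤ) ∣ m₁ - m₂ := by
        have heq' : ((m₁ : ZMod lam.toNat)) = (m₂ : ZMod lam.toNat) := heq
        have h := (ZMod.intCast_eq_intCast_iff' m₁ m₂ lam.toNat).mp heq'
        have h2 : (lam.toNat : ℤ) ∣ m₁ - m₂ := Int.ModEq.dvd h.symm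
        rwa [Int.toNat_of_nonneg hlam.le] at h2
      obtain ⟨j, hj⟩ := hdvd
      have hprod : ((V₁ : Γ) * (V₂ : Γ)⁻¹ : Γ) = S ^ j := by
        have hcoe : (((V₁ : Γ) * (V₂ : Γ)⁻¹ : Γ) : SL2Z) = ((S ^ j : Γ) : SL2Z) := by
          push_cast
          have expand : ((V₁ : Γ) : SL2Z) * (((V₂ : Γ) : SL2Z))⁻¹ =
              (((V₁ : Γ) : SL2Z) * (((W₀ : Γ) : SL2Z))⁻¹) *
                ((((V₂ : Γ) : SL2Z)) * (((W₀ : Γ) : SL2Z))⁻¹)⁻¹ := by group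
          rw [expand]
          have c1 : (((V₁ : Γ) : SL2Z) * (((W₀ : Γ) : SL2Z))⁻¹) = ModularGroup.T ^ m₁ := by
            rw [← hA1]; push_cast; rfl
          have c2 : (((V₂ : Γ) : SL2Z) * (((W₀ : Γ) : SL2Z))⁻¹) = ModularGroup.T ^ m₂ := by
            rw [← hA2]; push_cast; rfl
          rw [c1, c2, ← zpow_neg, ← zpow_add, show m₁ + -m₂ = lam * j by omega,
            coe_S_eq_T_pow S lam hS, ← zpow_mul]
        exact Subtype.ext hcoe
      have hmem : (V₁ : Γ) * (V₂ : Γ)⁻¹ ∈ Subgroup.zpowers S := by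
        rw [hprod]; exact zpow_mem (Subgroup.mem_zpowers S) j
      obtain ⟨W, ⟨_, _⟩, huniq⟩ := hΘ (V₁ : Γ)
      have e2 : (V₂ : Γ) = W := huniq (V₂ : Γ) ⟨(V₂ : Θ).2, hmem⟩
      have e1 : (V₁ : Γ) = W :=
        huniq (V₁ : Γ) ⟨(V₁ : Θ).2, by simpa using one_mem (Subgroup.zpowers S)⟩
      exact Subtype.ext (e1.trans e2.symm)
    simpa [ZMod.card] using this

lemma summable_zsq (s : ℝ) (hs : s < -1) :
    Summable (fun p : ℤ × ℤ => ((p.1 ^ 2 + p.2 ^ 2 : ℤ) : ℝ) ^ s) := by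
  have h2 : (2 : ℝ) < -(2 * s) := by linarith
  have base := EisensteinSeries.summable_one_div_norm_rpow h2
  have base2 : Summable (fun p : ℤ × ℤ => ‖(![p.1, p.2] : Fin 2 → ℤ)‖ ^ (-(-(2*s)))) := by
    have := ((finTwoArrowEquiv ℤ).symm.summable_iff
      (f := fun x : Fin 2 → ℤ => ‖x‖ ^ (-(-(2*s))))).mpr base
    simpa [finTwoArrowEquiv, Function.comp_def] using this
  simp only [neg_neg] at base2
  apply base2.of_nonneg_of_le
  · intro p
    positivity
  · intro p
    rcases eq_or_ne p 0 with hp | hp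
    · rw [show ((p.1 ^ 2 + p.2 ^ 2 : ℤ) : ℝ) = 0 by subst hp; norm_num,
        Real.zero_rpow (by linarith)]
      positivity
    · have hnorm : (0:ℝ) < ‖(![p.1, p.2] : Fin 2 → ℤ)‖ := by
        rw [norm_pos_iff]
        intro h
        apply hp
        have h0 := congrFun h 0
        have h1 := congrFun h 1
        simp at h0 h1
        exact Prod.ext h0 h1
      have hsq : ‖(![p.1, p.2] : Fin 2 → ℤ)‖ ^ (2:ℕ) ≤ ((p.1 ^ 2 + p.2 ^ 2 : ℤ) : ℝ) := by
        rw [EisensteinSeries.norm_eq_max_natAbs]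
        rcases max_cases ((p.1).natAbs) ((p.2).natAbs) with ⟨hm, _⟩ | ⟨hm, _⟩ <;>
          simp only [Matrix.cons_val_zero, Matrix.cons_val_one, Matrix.head_cons, hm] <;>
          push_cast [Nat.cast_natAbs] <;>
          nlinarith [sq_nonneg ((p.1:ℝ)), sq_nonneg ((p.2:ℝ)), _root_.sq_abs ((p.1:ℝ)),
            _root_.sq_abs ((p.2:ℝ))]
      calc ((p.1 ^ 2 + p.2 ^ 2 : ℤ) : ℝ) ^ s
          ≤ (‖(![p.1, p.2] : Fin 2 → ℤ)‖ ^ (2:ℕ)) ^ s := by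
            apply Real.rpow_le_rpow_of_nonpos (by positivity) hsq (by linarith)
        _ = ‖(![p.1, p.2] : Fin 2 → ℤ)‖ ^ (2 * s) := by
            rw [← Real.rpow_natCast _ 2, ← Real.rpow_mul (le_of_lt hnorm)]
            norm_num

lemma summable_theta {Γ : Subgroup SL2Z} (S : Γ) (lam : ℤ) (hlam : 0 < lam)
    (hS : IsTranslationOf (S : SL2Z) lam) (Θ : Set Γ)
    (hΘ : ∀ V : Γ, ∃! W : Γ, W ∈ Θ ∧ V * W⁻¹ ∈ Subgroup.zpowers S)
    (f : ℤ × ℤ → ℝ) (hf0 : ∀ p, 0 ≤ f p) (hf : Summable f)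
    (r : Θ → ℤ × ℤ)
    (hr : ∀ V : Θ, r V = (entry ((V : Γ) : SL2Z) 1 0, entry ((V : Γ) : SL2Z) 1 1)) :
    Summable (fun V : Θ => f (r V)) := by
  classical
  apply summable_of_sum_le (c := (lam.toNat : ℝ) * ∑' p, f p) (fun V => hf0 (r V))
  intro u
  rw [← Finset.sum_fiberwise_of_maps_to (g := r)
    (fun V hV => Finset.mem_image_of_mem r hV) (fun V => f (r V))]
  calc ∑ p ∈ u.image r, ∑ V ∈ u.filter (fun V => r V = p), f (r V)
      ≤ ∑ p ∈ u.image r, (lam.toNat : ℝ) * f p := by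
        apply Finset.sum_le_sum
        intro p hp
        have hconst : ∑ V ∈ u.filter (fun V => r V = p), f (r V) =
            (u.filter (fun V => r V = p)).card • f p := by
          rw [Finset.sum_congr rfl (fun V hV => by rw [(Finset.mem_filter.mp hV).2]),
            Finset.sum_const]
        rw [hconst, nsmul_eq_mul]
        apply mul_le_mul_of_nonneg_right _ (hf0 p)
        exact_mod_cast card_fiber_le S lam hlam hS Θ hΘ u p r hr
    _ = (lam.toNat : ℝ) * ∑ p ∈ u.image r, f p := by rw [Finset.mul_sum]
    _ ≤ (lam.toNat : ℝ) * ∑' p, f p := by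
        apply mul_le_mul_of_nonneg_left _ (by positivity)
        exact hf.sum_le_tsum _ (fun p _ => hf0 p)

lemma rpow_add_bound {a x b : ℝ} (ha : 0 < a) (hax : a ≤ x) (hxb : x ≤ b) (t : ℝ) :
    x ^ t ≤ a ^ t + b ^ t := by
  rcases le_or_gt 0 t with h | h
  · have h1 : x ^ t ≤ b ^ t := Real.rpow_le_rpow (le_trans ha.le hax) hxb h
    have h2 : 0 ≤ a ^ t := Real.rpow_nonneg ha.le t
    linarith
  · have h1 : x ^ t ≤ a ^ t := Real.rpow_le_rpow_of_nonpos ha hax h.le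
    have h2 : 0 ≤ b ^ t := Real.rpow_nonneg (by linarith) t
    linarith

lemma eta_bound {x y : ℝ} (hy : 0 < y) (hyx : y ≤ x) (η : ℝ) :
    x ^ η + y ^ (-η) ≤ 2 * (x ^ (|η| + 1) + y ^ (-(|η| + 1))) := by
  have hx : 0 < x := lt_of_lt_of_le hy hyx
  have h1 : x ^ η ≤ x ^ (|η| + 1) + y ^ (-(|η| + 1)) := by
    rcases le_or_gt 1 x with h | h
    · have ha : x ^ η ≤ x ^ (|η| + 1) :=
        Real.rpow_le_rpow_of_exponent_le h (by have := le_abs_self η; linarith)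
      have hb : 0 ≤ y ^ (-(|η| + 1)) := Real.rpow_nonneg hy.le _
      linarith
    · have ha : x ^ η ≤ x ^ (-(|η| + 1)) :=
        Real.rpow_le_rpow_of_exponent_ge hx h.le (by have := neg_abs_le η; linarith)
      have hb : x ^ (-(|η| + 1)) ≤ y ^ (-(|η| + 1)) :=
        Real.rpow_le_rpow_of_nonpos hy hyx (by have := abs_nonneg η; linarith)
      have hc : 0 ≤ x ^ (|η| + 1) := Real.rpow_nonneg hx.le _
      linarith
  have h2 : y ^ (-η) ≤ x ^ (|η| + 1) + y ^ (-(|η| + 1)) := by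
    rcases le_or_gt 1 y with h | h
    · have ha : y ^ (-η) ≤ y ^ (|η| + 1) :=
        Real.rpow_le_rpow_of_exponent_le h (by have := neg_le_abs η; linarith)
      have hb : y ^ (|η| + 1) ≤ x ^ (|η| + 1) :=
        Real.rpow_le_rpow hy.le hyx (by have := abs_nonneg η; linarith)
      have hc : 0 ≤ y ^ (-(|η| + 1)) := Real.rpow_nonneg hy.le _
      linarith
    · have ha : y ^ (-η) ≤ y ^ (-(|η| + 1)) :=
        Real.rpow_le_rpow_of_exponent_ge hy h.le (by have := le_abs_self η; linarith)
      have hc : 0 ≤ x ^ (|η| + 1) := Real.rpow_nonneg hx.le _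
      linarith
  linarith

/-- Convergence of the generalized Poincaré series: under the cocycle
estimate, for `k' > ψ = 2e + 4 + 2α` the series `Ψ(z) = Σ_{V∈Θ} φ_V(z) conj(w(V))
(cz+d)^{−k'}` converges absolutely on ℍ and `Ψ ∈ 𝒫`. -/
theorem poincare_series_converges_and_mem_P
    (Γ : Subgroup SL2Z) (hΓ : Γ.FiniteIndex)
    (k : ℝ) (v : Γ → ℂ) (hv : IsMultiplier Γ k v)
    (lam : ℤ) (hlam : 0 < lam) (S : Γ) (hS : IsTranslationOf (S : SL2Z) lam)
    (t : ℕ) (Q : Fin (t + 1) → Γ) (hQ0 : Q 0 = S)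
    (hQpar : ∀ h : Fin (t + 1), IsParabolicMat ((Q h : Γ) : SL2Z))
    (φ : Γ → ℂ → ℂ) (hφ : IsCocycle Γ k v φ)
    (hφpar : ∀ h : Fin (t + 1), IsParabolicAt Γ k v φ (Q h))
    (hφS : φ S = 0)
    (k' : ℕ) (hk'pos : 0 < k') (hk'even : Even k')
    (w : Γ → ℂ) (hw : IsMultiplier Γ (k' : ℝ) w)
    (K α : ℝ) (hK : 0 < K)
    (hwbd : ∀ V : Γ, ‖w V‖ ≤ K * ((muSL (V : SL2Z) : ℤ) : ℝ) ^ α)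
    (Θ : Set Γ)
    (hΘ : ∀ V : Γ, ∃! W : Γ, W ∈ Θ ∧ V * W⁻¹ ∈ Subgroup.zpowers S)
    (K₁ e : ℝ) (hK₁ : 0 < K₁) (he : 0 < e)
    (hest : ∀ V ∈ Θ, ∀ z : ℂ, 0 < z.im →
      ‖φ V z * conj (w V) * ppow (denom (V : SL2Z) z) (-(k' : ℝ))‖ ≤
        K₁ * ((((entry (V : SL2Z) 1 0) ^ 2 + (entry (V : SL2Z) 1 1) ^ 2 : ℤ)) : ℝ) ^
            (e + 1 + α - (k' : ℝ) / 2) *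
          (‖z‖ ^ (6 * e - 2 * k) + z.im ^ (-(6 * e - 2 * k))))
    (hψ : 2 * e + 4 + 2 * α < (k' : ℝ)) :
    (∀ z : ℂ, 0 < z.im →
      Summable (fun V : Θ =>
        ‖φ (V : Γ) z * conj (w (V : Γ)) *
          ppow (denom ((V : Γ) : SL2Z) z) (-(k' : ℝ))‖)) ∧
    MemP (poincareSeries Γ Θ w (k' : ℝ) φ) := by
  classical
  set η : ℝ := 6 * e - 2 * k with hη
  set s : ℝ := e + 1 + α - (k' : ℝ) / 2 with hsdef
  have hs : s < -1 := by rw [hsdef]; linarith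
  set f : ℤ × ℤ → ℝ := fun p => ((p.1 ^ 2 + p.2 ^ 2 : ℤ) : ℝ) ^ s with hfdef
  have hf0 : ∀ p, 0 ≤ f p := fun p => Real.rpow_nonneg (by positivity) s
  have hfs : Summable f := summable_zsq s hs
  set r : Θ → ℤ × ℤ :=
    fun V => (entry ((V : Γ) : SL2Z) 1 0, entry ((V : Γ) : SL2Z) 1 1) with hrdef
  have hΘsum : Summable (fun V : Θ => f (r V)) :=
    summable_theta S lam hlam hS Θ hΘ f hf0 hfs r (fun _ => rfl)
  set C : ℝ := ∑' V : Θ, f (r V) with hCdef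
  have hC0 : 0 ≤ C := tsum_nonneg fun V => hf0 _
  have hest' : ∀ (V : Θ) (z : ℂ), 0 < z.im →
      ‖φ (V : Γ) z * conj (w (V : Γ)) *
        ppow (denom ((V : Γ) : SL2Z) z) (-(k' : ℝ))‖ ≤
        K₁ * f (r V) * (‖z‖ ^ η + z.im ^ (-η)) :=
    fun V z hz => hest (V : Γ) V.2 z hz
  have part1 : ∀ z : ℂ, 0 < z.im →
      Summable (fun V : Θ =>
        ‖φ (V : Γ) z * conj (w (V : Γ)) *
          ppow (denom ((V : Γ) : SL2Z) z) (-(k' : ℝ))‖) := by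
    intro z hz
    apply Summable.of_nonneg_of_le (fun V => norm_nonneg _)
      (fun V => hest' V z hz)
    exact (hΘsum.mul_left K₁).mul_right _
  refine ⟨part1, ?_, ?_⟩
  · -- differentiability
    intro z₀ hz₀
    set c : ℝ := z₀.im / 2 with hcdef
    set R : ℝ := ‖z₀‖ + 1 with hRdef
    have hc : 0 < c := by rw [hcdef]; linarith
    have habsz₀ : 0 < ‖z₀‖ :=
      lt_of_lt_of_le hz₀ (le_trans (le_abs_self _) (Complex.abs_im_le_norm z₀))
    set U : Set ℂ := {z | c < z.im} ∩ Metric.ball 0 R with hUdef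
    have hUopen : IsOpen U :=
      (isOpen_lt continuous_const Complex.continuous_im).inter Metric.isOpen_ball
    have hz₀U : z₀ ∈ U := by
      constructor
      · show c < z₀.im
        rw [hcdef]; linarith
      · rw [mem_ball_zero_iff]
        show ‖z₀‖ < R
        rw [hRdef]
        linarith
    have hUprop : ∀ z ∈ U, 0 < z.im ∧ c < z.im ∧ z.im ≤ R ∧ c ≤ ‖z‖ ∧
        ‖z‖ ≤ R := by
      rintro z ⟨h1, h2⟩
      have h1' : c < z.im := h1
      have h2' : ‖z‖ < R := by
        rw [Metric.mem_ball, Complex.dist_eq, sub_zero] at h2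
        exact h2
      have him : z.im ≤ ‖z‖ :=
        le_trans (le_abs_self _) (Complex.abs_im_le_norm z)
      exact ⟨lt_trans hc h1', h1', le_of_lt (lt_of_le_of_lt him h2'),
        le_trans h1'.le him, h2'.le⟩
    set B : ℝ := (c ^ η + R ^ η) + (c ^ (-η) + R ^ (-η)) with hBdef
    have hBbound : ∀ z ∈ U, ‖z‖ ^ η + z.im ^ (-η) ≤ B := by
      intro z hzU
      obtain ⟨h0, h1, h2, h3, h4⟩ := hUprop z hzU
      have A1 := rpow_add_bound hc h3 h4 η
      have A2 := rpow_add_bound hc h1.le h2 (-η)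
      rw [hBdef]; linarith
    set F : Θ → ℂ → ℂ := fun V z => φ (V : Γ) z * conj (w (V : Γ)) *
      ppow (denom ((V : Γ) : SL2Z) z) (-(k' : ℝ)) with hFdef
    have husum : Summable (fun V : Θ => K₁ * f (r V) * B) :=
      (hΘsum.mul_left K₁).mul_right B
    have hFle : ∀ (V : Θ) (z : ℂ), z ∈ U → ‖F V z‖ ≤ K₁ * f (r V) * B := by
      intro V z hzU
      have h0 := (hUprop z hzU).1
      have hlhs : ‖F V z‖ ≤ K₁ * f (r V) * (‖z‖ ^ η + z.im ^ (-η)) :=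
        hest' V z h0
      refine le_trans hlhs ?_
      apply mul_le_mul_of_nonneg_left (hBbound z hzU)
      exact mul_nonneg hK₁.le (hf0 _)
    have hFdiff : ∀ V : Θ, DifferentiableOn ℂ (F V) U := by
      intro V
      have heq : ∀ z ∈ U, F V z = φ (V : Γ) z * conj (w (V : Γ)) *
          (denom ((V : Γ) : SL2Z) z) ^ (-(k' : ℤ)) := by
        intro z hzU
        have h0 := (hUprop z hzU).1
        have hcast : (-(k' : ℝ)) = ((-(k' : ℤ) : ℤ) : ℝ) := by push_cast; ring
        rw [hFdef]
        simp only
        rw [hcast, ppow_int]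
      apply DifferentiableOn.congr ?_ heq
      intro z hzU
      have h0 := (hUprop z hzU).1
      apply DifferentiableAt.differentiableWithinAt
      apply DifferentiableAt.mul
      · exact ((hφ.1 (V : Γ)).1 z h0).mul (differentiableAt_const _)
      · apply DifferentiableAt.zpow
        · apply DifferentiableAt.add
          · exact (differentiableAt_const _).mul differentiableAt_id
          · exact differentiableAt_const _
        · exact Or.inl (denom_ne_zero _ z h0)
    have hdiff := differentiableOn_tsum_of_summable_norm husum hFdiff hUopen hFle
    have hΨU : DifferentiableOn ℂ (poincareSeries Γ Θ w (k' : ℝ) φ) U := hdiff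
    exact hΨU.differentiableAt (hUopen.mem_nhds hz₀U)
  · -- the growth bound
    refine ⟨2 * (K₁ * C) + 1, |η| + 1, |η| + 1, by positivity, by positivity, by positivity, ?_⟩
    intro z hz
    have habsz : 0 < ‖z‖ :=
      lt_of_lt_of_le hz (le_trans (le_abs_self _) (Complex.abs_im_le_norm z))
    have hyx : z.im ≤ ‖z‖ :=
      le_trans (le_abs_self _) (Complex.abs_im_le_norm z)
    have hsum1 := part1 z hz
    have hsum2 : Summable (fun V : Θ => K₁ * f (r V) * (‖z‖ ^ η + z.im ^ (-η))) :=
      (hΘsum.mul_left K₁).mul_right _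
    have h1 : ‖poincareSeries Γ Θ w (k' : ℝ) φ z‖ ≤
        ∑' V : Θ, ‖φ (V : Γ) z * conj (w (V : Γ)) *
          ppow (denom ((V : Γ) : SL2Z) z) (-(k' : ℝ))‖ := by
      have hs1' : Summable (fun V : Θ => ‖φ (V : Γ) z * conj (w (V : Γ)) *
          ppow (denom ((V : Γ) : SL2Z) z) (-(k' : ℝ))‖) := by
        exact hsum1
      have hle := norm_tsum_le_tsum_norm hs1'
      simpa only [poincareSeries] using hle
    have h2 : ∑' V : Θ, ‖φ (V : Γ) z * conj (w (V : Γ)) *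
          ppow (denom ((V : Γ) : SL2Z) z) (-(k' : ℝ))‖ ≤
        ∑' V : Θ, K₁ * f (r V) * (‖z‖ ^ η + z.im ^ (-η)) :=
      Summable.tsum_le_tsum (fun V => hest' V z hz) hsum1 hsum2
    have h3 : ∑' V : Θ, K₁ * f (r V) * (‖z‖ ^ η + z.im ^ (-η)) =
        K₁ * C * (‖z‖ ^ η + z.im ^ (-η)) := by
      rw [tsum_mul_right, hCdef, ← tsum_mul_left]
    have h4 : ‖z‖ ^ η + z.im ^ (-η) ≤
        2 * (‖z‖ ^ (|η| + 1) + z.im ^ (-(|η| + 1))) := eta_bound hz hyx η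
    have hpos : 0 < ‖z‖ ^ (|η| + 1) + z.im ^ (-(|η| + 1)) := by
      have := Real.rpow_pos_of_pos habsz (|η| + 1)
      have := Real.rpow_pos_of_pos hz (-(|η| + 1))
      linarith
    have hchain : ‖poincareSeries Γ Θ w (k' : ℝ) φ z‖ ≤
        2 * (K₁ * C) * (‖z‖ ^ (|η| + 1) + z.im ^ (-(|η| + 1))) := by
      have hKC : 0 ≤ K₁ * C := mul_nonneg hK₁.le hC0
      calc ‖poincareSeries Γ Θ w (k' : ℝ) φ z‖
          ≤ K₁ * C * (‖z‖ ^ η + z.im ^ (-η)) := by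
            rw [← h3]; exact le_trans h1 h2
        _ ≤ K₁ * C * (2 * (‖z‖ ^ (|η| + 1) + z.im ^ (-(|η| + 1)))) :=
            mul_le_mul_of_nonneg_left h4 hKC
        _ = 2 * (K₁ * C) * (‖z‖ ^ (|η| + 1) + z.im ^ (-(|η| + 1))) := by ring
    calc ‖poincareSeries Γ Θ w (k' : ℝ) φ z‖
        ≤ 2 * (K₁ * C) * (‖z‖ ^ (|η| + 1) + z.im ^ (-(|η| + 1))) := hchain
      _ < (2 * (K₁ * C) + 1) * (‖z‖ ^ (|η| + 1) + z.im ^ (-(|η| + 1))) := by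
          have hKC : 0 ≤ 2 * (K₁ * C) := by positivity
          nlinarith
end
end

section
/- Let k be a nonnegative integer, Γ a subgroup of finite index in SL(2,ℤ), and v a multiplier system for Γ. If F ∈ {Γ, −k, v}, i.e., F is holomorphic on ℍ and satisfies F(Mz) = v(M)(cz+d)^{−k}F(z) for all M = (a b; c d) ∈ Γ, then F^{(k+1)} ∈ {Γ, k+2, v}, i.e., F^{(k+1)}(Mz) = v(M)(cz+d)^{k+2}F^{(k+1)}(z) for all M ∈ Γ and z ∈ ℍ. -/
open Complex ComplexConjugate

noncomputable section

namespace BolAux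

def A (k : ℕ) : ℕ → ℕ → ℤ
  | 0, 0 => 1
  | 0, _ + 1 => 0
  | n + 1, 0 => ((k : ℤ) - n) * A k n 0
  | n + 1, j + 1 => ((k : ℤ) - n - (j + 1)) * A k n (j + 1) + A k n j

lemma A_eq_zero (k : ℕ) : ∀ n j : ℕ, n < j → A k n j = 0
  | 0, 0, h => absurd h (lt_irrefl 0)
  | 0, _ + 1, _ => rfl
  | n + 1, 0, h => absurd h (Nat.not_lt_zero _)
  | n + 1, j + 1, h => by
      rw [A, A_eq_zero k n (j + 1) (by omega), A_eq_zero k n j (by omega)]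
      ring

lemma A_diag (k : ℕ) : ∀ n : ℕ, A k n n = 1
  | 0 => rfl
  | n + 1 => by rw [A, A_eq_zero k n (n + 1) (by omega), A_diag k n]; ring

lemma A_formula (k : ℕ) : ∀ n : ℕ, n ≤ k → ∀ j : ℕ, j ≤ n →
    A k n j = (n.choose j : ℤ) * ((k - j).descFactorial (n - j) : ℤ)
  | 0, _, j, hj => by
      interval_cases j
      simp [A]
  | n + 1, hn, 0, _ => by
      rw [A, A_formula k n (by omega) 0 (by omega)]
      rw [Nat.sub_zero, Nat.sub_zero, Nat.sub_zero, Nat.descFactorial_succ,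
        Nat.choose_zero_right, Nat.choose_zero_right]
      have h1 : (↑(k - n) : ℤ) = (k : ℤ) - n := by omega
      push_cast [← h1]
      ring
  | n + 1, hn, j + 1, hj => by
      rcases Nat.lt_or_ge j n with hjn | hjn
      · rw [A, A_formula k n (by omega) (j + 1) (by omega), A_formula k n (by omega) j (by omega)]
        have hd1 : (((k - (j + 1)).descFactorial (n - (j + 1)) : ℤ)) * ((k : ℤ) - n) =
            ((k - (j + 1)).descFactorial ((n + 1) - (j + 1)) : ℤ) := by
          have h1 : (n + 1) - (j + 1) = (n - (j + 1)) + 1 := by omega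
          rw [show (n + 1) - (j + 1) = n - j from by omega,
            show n - j = (n - (j + 1)) + 1 from by omega, Nat.descFactorial_succ]
          have h2 : k - (j + 1) - (n - (j + 1)) = k - n := by omega
          rw [h2]
          have h3 : (↑(k - n) : ℤ) = (k : ℤ) - n := by omega
          push_cast [h3]
          ring
        have hd2 : ((k - j).descFactorial (n - j) : ℤ) =
            ((k : ℤ) - j) * ((k - (j + 1)).descFactorial (n - (j + 1)) : ℤ) := by
          have h1 : k - j = (k - (j + 1)) + 1 := by omega
          have h2 : n - j = (n - (j + 1)) + 1 := by omega
          rw [h1, h2, Nat.succ_descFactorial_succ]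
          have h3 : (↑(k - (j + 1)) : ℤ) = (k : ℤ) - (j + 1) := by omega
          push_cast [h3]
          ring
        have hch : ((j : ℤ) + 1) * (n.choose (j + 1) : ℤ) = ((n : ℤ) - j) * (n.choose j : ℤ) := by
          have h := Nat.choose_succ_right_eq n j
          zify [hjn.le] at h
          linarith
        rw [Nat.choose_succ_succ]
        rw [show (n + 1) - (j + 1) = n - j from by omega] at hd1
        push_cast
        set C0 : ℤ := (n.choose j : ℤ)
        set C1 : ℤ := (n.choose (j + 1) : ℤ)
        set D : ℤ := ((k - (j + 1)).descFactorial (n - (j + 1)) : ℤ)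
        linear_combination (C0 + C1) * hd1 + C0 * hd2 - D * hch
      · obtain rfl : j = n := by omega
        rw [A, A_eq_zero k j (j + 1) (by omega), A_diag k j]
        simp

lemma A_last_zero (k : ℕ) : ∀ j : ℕ, j ≤ k → A k (k + 1) j = 0
  | 0, _ => by
      rw [A]
      have : ((k : ℤ) - k) = 0 := by ring
      rw [this, zero_mul]
  | j + 1, hj => by
      rw [A, A_formula k k le_rfl (j + 1) hj, A_formula k k le_rfl j (by omega)]
      have hd1 : (k - (j + 1)).descFactorial (k - (j + 1)) = (k - (j + 1)).factorial :=
        Nat.descFactorial_self _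
      have hd2 : (k - j).descFactorial (k - j) = (k - j).factorial := Nat.descFactorial_self _
      rw [hd1, hd2]
      have hf : ((k - j).factorial : ℤ) = ((k : ℤ) - j) * ((k - (j + 1)).factorial : ℤ) := by
        have h1 : k - j = (k - (j + 1)) + 1 := by omega
        rw [h1, Nat.factorial_succ]
        have h3 : (↑(k - (j + 1)) : ℤ) = (k : ℤ) - (j + 1) := by omega
        push_cast [h3]
        ring
      have hch : ((j : ℤ) + 1) * (k.choose (j + 1) : ℤ) = ((k : ℤ) - j) * (k.choose j : ℤ) := by
        have h := Nat.choose_succ_right_eq k j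
        zify [show j ≤ k by omega] at h
        linarith
      rw [hf]
      push_cast
      linear_combination (-((k - (j + 1)).factorial : ℤ)) * hch


lemma det_entry (M : SL2Z) :
    entry M 0 0 * entry M 1 1 - entry M 0 1 * entry M 1 0 = 1 := by
  have h := M.2
  rw [Matrix.det_fin_two] at h
  exact h

lemma det_entryC (M : SL2Z) :
    (entry M 0 0 : ℂ) * (entry M 1 1 : ℂ) - (entry M 0 1 : ℂ) * (entry M 1 0 : ℂ) = 1 := by
  exact_mod_cast congrArg (fun n : ℤ => (n : ℂ)) (det_entry M)

lemma denom_im (M : SL2Z) (z : ℂ) : (denom M z).im = (entry M 1 0 : ℝ) * z.im := by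
  simp [denom, Complex.add_im, Complex.mul_im]

lemma denom_ne_zero (M : SL2Z) (z : ℂ) (hz : 0 < z.im) : denom M z ≠ 0 := by
  intro h
  have him : (denom M z).im = 0 := by rw [h]; simp
  rw [denom_im] at him
  have hc : (entry M 1 0 : ℝ) = 0 := by
    rcases mul_eq_zero.mp him with h1 | h1
    · exact h1
    · exact absurd h1 (ne_of_gt hz)
  have hc' : entry M 1 0 = 0 := by exact_mod_cast hc
  rw [denom, hc'] at h
  simp at h
  have hd' : entry M 1 1 = 0 := by exact_mod_cast h
  have := det_entry M
  rw [hc', hd'] at this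
  simp at this

lemma isOpen_UH : IsOpen {z : ℂ | 0 < z.im} := isOpen_lt continuous_const Complex.continuous_im

lemma moeb_im (M : SL2Z) (z : ℂ) (hz : 0 < z.im) :
    (moeb M z).im = z.im / Complex.normSq (denom M z) := by
  have hdet : (entry M 0 0 : ℝ) * (entry M 1 1 : ℝ) -
      (entry M 0 1 : ℝ) * (entry M 1 0 : ℝ) = 1 := by
    exact_mod_cast congrArg (fun n : ℤ => (n : ℝ)) (det_entry M)
  rw [moeb, Complex.div_im]
  rw [div_sub_div_same]
  congr 1
  simp only [denom, Complex.add_im, Complex.add_re, Complex.mul_im, Complex.mul_re,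
    Complex.intCast_re, Complex.intCast_im]
  linear_combination z.im * hdet

lemma moeb_im_pos (M : SL2Z) (z : ℂ) (hz : 0 < z.im) : 0 < (moeb M z).im := by
  rw [moeb_im M z hz]
  exact div_pos hz (Complex.normSq_pos.mpr (denom_ne_zero M z hz))

lemma hasDerivAt_denom (M : SL2Z) (z : ℂ) :
    HasDerivAt (fun y => denom M y) ((entry M 1 0 : ℂ)) z := by
  have h := ((hasDerivAt_id z).const_mul ((entry M 1 0 : ℤ) : ℂ)).add_const ((entry M 1 1 : ℤ) : ℂ)
  simpa [denom] using h

lemma hasDerivAt_moeb (M : SL2Z) (z : ℂ) (hz : 0 < z.im) :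
    HasDerivAt (moeb M) ((denom M z) ^ (-2 : ℤ)) z := by
  have hw := denom_ne_zero M z hz
  have hnum : HasDerivAt (fun y => (entry M 0 0 : ℂ) * y + (entry M 0 1 : ℂ))
      ((entry M 0 0 : ℂ)) z := by
    have h := ((hasDerivAt_id z).const_mul ((entry M 0 0 : ℤ) : ℂ)).add_const ((entry M 0 1 : ℤ) : ℂ)
    simpa using h
  have hden := hasDerivAt_denom M z
  have h := hnum.div hden hw
  have hval : ((entry M 0 0 : ℂ) * denom M z -
      ((entry M 0 0 : ℂ) * z + (entry M 0 1 : ℂ)) * (entry M 1 0 : ℂ)) / (denom M z) ^ 2 =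
      (denom M z) ^ (-2 : ℤ) := by
    have h1 : (entry M 0 0 : ℂ) * denom M z -
        ((entry M 0 0 : ℂ) * z + (entry M 0 1 : ℂ)) * (entry M 1 0 : ℂ) = 1 := by
      rw [denom]
      linear_combination det_entryC M
    rw [h1, zpow_neg, one_div, ← zpow_natCast (denom M z) 2]
    norm_num
  exact hval ▸ h

lemma analytic_iter (F : ℂ → ℂ) (hF : ∀ z : ℂ, 0 < z.im → DifferentiableAt ℂ F z) :
    ∀ n : ℕ, AnalyticOnNhd ℂ (iteratedDeriv n F) {z : ℂ | 0 < z.im}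
  | 0 => by
      rw [iteratedDeriv_zero]
      exact DifferentiableOn.analyticOnNhd
        (fun z hz => (hF z hz).differentiableWithinAt) isOpen_UH
  | n + 1 => by
      rw [iteratedDeriv_succ]
      exact (analytic_iter F hF n).deriv

lemma bol_main (k : ℕ) (M : SL2Z) (v : ℂ) (F : ℂ → ℂ)
    (hF : ∀ z : ℂ, 0 < z.im → DifferentiableAt ℂ F z)
    (h0 : ∀ z : ℂ, 0 < z.im → v * F z = (denom M z) ^ (k : ℤ) * F (moeb M z)) :
    ∀ n : ℕ, ∀ z : ℂ, 0 < z.im →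
      v * iteratedDeriv n F z =
        ∑ j ∈ Finset.range (n + 1), (A k n j : ℂ) * (entry M 1 0 : ℂ) ^ (n - j) *
          (denom M z) ^ ((k : ℤ) - n - j) * iteratedDeriv j F (moeb M z) := by
  intro n
  induction n with
  | zero =>
      intro z hz
      simpa [A] using h0 z hz
  | succ n ih =>
      intro z hz
      have hw := denom_ne_zero M z hz
      have hu : 0 < (moeb M z).im := moeb_im_pos M z hz
      have hGanal := analytic_iter F hF
      set c : ℂ := (entry M 1 0 : ℂ) with hc
      set w : ℂ := denom M z with hwdef
      set u : ℂ := moeb M z with hudef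
      -- derivative of each term of the sum
      have key : ∀ j ∈ Finset.range (n + 1),
          HasDerivAt (fun y => (A k n j : ℂ) * c ^ (n - j) *
              (denom M y) ^ ((k : ℤ) - n - j) * iteratedDeriv j F (moeb M y))
            ((A k n j : ℂ) * c ^ (n - j) *
                ((((k : ℤ) - n - j : ℤ) : ℂ) * w ^ ((k : ℤ) - n - j - 1) * c) *
                iteratedDeriv j F u
              + (A k n j : ℂ) * c ^ (n - j) * w ^ ((k : ℤ) - n - j) *
                (iteratedDeriv (j + 1) F u * w ^ (-2 : ℤ))) z := by
        intro j hj
        have hpow : HasDerivAt (fun y => (denom M y) ^ ((k : ℤ) - n - j))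
            ((((k : ℤ) - n - j : ℤ) : ℂ) * w ^ ((k : ℤ) - n - j - 1) * c) z :=
          by
            have h := HasDerivAt.comp z (hasDerivAt_zpow ((k : ℤ) - n - j) (denom M z) (Or.inl hw)) (hasDerivAt_denom M z)
            exact h
        have hGd : HasDerivAt (iteratedDeriv j F) (iteratedDeriv (j + 1) F u) u := by
          have h1 := ((hGanal j) u hu).differentiableAt.hasDerivAt
          rwa [← iteratedDeriv_succ] at h1
        have hcomp : HasDerivAt (fun y => iteratedDeriv j F (moeb M y))
            (iteratedDeriv (j + 1) F u * w ^ (-2 : ℤ)) z :=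
          by
            have h := HasDerivAt.comp z (h₂ := iteratedDeriv j F) hGd (hasDerivAt_moeb M z hz)
            exact h
        exact (hpow.const_mul ((A k n j : ℂ) * c ^ (n - j))).mul hcomp
      have hsum := HasDerivAt.fun_sum key
      have hL : HasDerivAt (fun y => v * iteratedDeriv n F y) (v * iteratedDeriv (n + 1) F z) z := by
        have h1 := ((hGanal n) z hz).differentiableAt.hasDerivAt
        rw [← iteratedDeriv_succ] at h1
        exact h1.const_mul v
      have heq : (fun y => v * iteratedDeriv n F y) =ᶠ[nhds z]
          (fun y => ∑ j ∈ Finset.range (n + 1), (A k n j : ℂ) * c ^ (n - j) *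
            (denom M y) ^ ((k : ℤ) - n - j) * iteratedDeriv j F (moeb M y)) :=
        Filter.eventuallyEq_of_mem (isOpen_UH.mem_nhds hz) (fun y hy => ih y hy)
      have hde : v * iteratedDeriv (n + 1) F z =
          ∑ j ∈ Finset.range (n + 1),
            ((A k n j : ℂ) * c ^ (n - j) *
                ((((k : ℤ) - n - j : ℤ) : ℂ) * w ^ ((k : ℤ) - n - j - 1) * c) *
                iteratedDeriv j F u
              + (A k n j : ℂ) * c ^ (n - j) * w ^ ((k : ℤ) - n - j) *
                (iteratedDeriv (j + 1) F u * w ^ (-2 : ℤ))) := by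
        rw [← hL.deriv, heq.deriv_eq, hsum.deriv]
      rw [hde]
      -- now a purely algebraic identity about sums
      set G : ℕ → ℂ := fun j => iteratedDeriv j F u with hG
      set P : ℕ → ℂ := fun j => (((k : ℤ) - n - j : ℤ) : ℂ) * (A k n j : ℂ) * c ^ (n + 1 - j) *
        w ^ ((k : ℤ) - (n + 1 : ℕ) - j) * G j with hP
      set Q : ℕ → ℂ := fun j => (A k n j : ℂ) * c ^ (n - j) *
        w ^ ((k : ℤ) - (n + 1 : ℕ) - ((j : ℕ) + 1 : ℕ)) * G (j + 1) with hQ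
      have hPQ : ∀ j ∈ Finset.range (n + 1),
          ((A k n j : ℂ) * c ^ (n - j) *
                ((((k : ℤ) - n - j : ℤ) : ℂ) * w ^ ((k : ℤ) - n - j - 1) * c) * G j
              + (A k n j : ℂ) * c ^ (n - j) * w ^ ((k : ℤ) - n - j) *
                (G (j + 1) * w ^ (-2 : ℤ))) = P j + Q j := by
        intro j hj
        have hj' : j ≤ n := Nat.lt_succ_iff.mp (Finset.mem_range.mp hj)
        have e1 : w ^ ((k : ℤ) - n - j - 1) = w ^ ((k : ℤ) - (n + 1 : ℕ) - j) := by
          congr 1; push_cast; ring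
        have e2 : w ^ ((k : ℤ) - n - j) * w ^ (-2 : ℤ) =
            w ^ ((k : ℤ) - (n + 1 : ℕ) - ((j : ℕ) + 1 : ℕ)) := by
          rw [← zpow_add₀ hw]; congr 1; push_cast; ring
        have e3 : c ^ (n - j) * c = c ^ (n + 1 - j) := by
          rw [← pow_succ]; congr 1; omega
        rw [hP, hQ]
        simp only
        rw [← e3, ← e1, ← e2]
        ring
      rw [Finset.sum_congr rfl hPQ, Finset.sum_add_distrib]
      -- compute the target sum
      have hsplit : ∑ j ∈ Finset.range (n + 1 + 1), (A k (n + 1) j : ℂ) * c ^ (n + 1 - j) *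
            w ^ ((k : ℤ) - (n + 1 : ℕ) - j) * G j =
          (∑ j ∈ Finset.range (n + 1), (A k (n + 1) (j + 1) : ℂ) * c ^ (n + 1 - (j + 1)) *
            w ^ ((k : ℤ) - (n + 1 : ℕ) - (j + 1 : ℕ)) * G (j + 1))
          + (A k (n + 1) 0 : ℂ) * c ^ (n + 1 - 0) * w ^ ((k : ℤ) - (n + 1 : ℕ) - (0 : ℕ)) * G 0 :=
        Finset.sum_range_succ' _ (n + 1)
      rw [hsplit]
      have hterm : ∀ j ∈ Finset.range (n + 1),
          (A k (n + 1) (j + 1) : ℂ) * c ^ (n + 1 - (j + 1)) *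
            w ^ ((k : ℤ) - (n + 1 : ℕ) - (j + 1 : ℕ)) * G (j + 1) = P (j + 1) + Q j := by
        intro j hj
        have hj' : j ≤ n := Nat.lt_succ_iff.mp (Finset.mem_range.mp hj)
        rw [hP, hQ]
        simp only
        rw [A]
        have e4 : (n + 1) - (j + 1) = n - j := by omega
        rw [e4]
        push_cast
        ring
      rw [Finset.sum_congr rfl hterm, Finset.sum_add_distrib]
      have hP0 : (A k (n + 1) 0 : ℂ) * c ^ (n + 1 - 0) * w ^ ((k : ℤ) - (n + 1 : ℕ) - (0 : ℕ)) * G 0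
          = P 0 := by
        rw [hP]
        simp only
        rw [A]
        push_cast
        ring
      rw [hP0]
      have hPsum : (∑ j ∈ Finset.range (n + 1), P (j + 1)) + P 0 =
          ∑ j ∈ Finset.range (n + 1), P j := by
        rw [← Finset.sum_range_succ' P (n + 1), Finset.sum_range_succ]
        have : P (n + 1) = 0 := by
          rw [hP]
          simp only
          rw [A_eq_zero k n (n + 1) (by omega)]
          simp
        rw [this, add_zero]
      rw [add_right_comm, hPsum]

end BolAux

/-- If `F ∈ {Γ, −k, v}` (integer `k ≥ 0`), then its `(k+1)`-st
derivative lies in `{Γ, k+2, v}`. -/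
theorem iteratedDeriv_of_weight_neg_k_is_weight_k_add_two
    (Γ : Subgroup SL2Z) (hΓ : Γ.FiniteIndex)
    (k : ℕ) (v : Γ → ℂ)
    (hv0 : ∀ M : Γ, v M ≠ 0)
    (hvmul : ∀ M₁ M₂ : Γ, v (M₁ * M₂) = v M₁ * v M₂)
    (F : ℂ → ℂ)
    (hF : ∀ z : ℂ, 0 < z.im → DifferentiableAt ℂ F z)
    (htrans : ∀ M : Γ, ∀ z : ℂ, 0 < z.im →
      F (moeb (M : SL2Z) z) = v M * (denom (M : SL2Z) z) ^ (-(k : ℤ)) * F z) :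
    ∀ M : Γ, ∀ z : ℂ, 0 < z.im →
      iteratedDeriv (k + 1) F (moeb (M : SL2Z) z) =
        v M * (denom (M : SL2Z) z) ^ ((k : ℤ) + 2) * iteratedDeriv (k + 1) F z := by
  intro M z hz
  have hw := BolAux.denom_ne_zero (M : SL2Z) z hz
  have h0 : ∀ y : ℂ, 0 < y.im →
      v M * F y = (denom (M : SL2Z) y) ^ (k : ℤ) * F (moeb (M : SL2Z) y) := by
    intro y hy
    have hwy := BolAux.denom_ne_zero (M : SL2Z) y hy
    have h1 : (denom (M : SL2Z) y) ^ (k : ℤ) * (denom (M : SL2Z) y) ^ (-(k : ℤ)) = 1 := by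
      rw [← zpow_add₀ hwy]; simp
    rw [htrans M y hy]
    linear_combination (-(v M * F y)) * h1
  have hmain := BolAux.bol_main k (M : SL2Z) (v M) F hF h0 (k + 1) z hz
  rw [Finset.sum_range_succ] at hmain
  have hzero : ∑ j ∈ Finset.range (k + 1), (BolAux.A k (k + 1) j : ℂ) *
      (entry (M : SL2Z) 1 0 : ℂ) ^ (k + 1 - j) * (denom (M : SL2Z) z) ^ ((k : ℤ) - (k + 1 : ℕ) - j) *
      iteratedDeriv j F (moeb (M : SL2Z) z) = 0 := by
    refine Finset.sum_eq_zero fun j hj => ?_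
    rw [BolAux.A_last_zero k j (Nat.lt_succ_iff.mp (Finset.mem_range.mp hj))]
    simp
  rw [hzero, zero_add, BolAux.A_diag k (k + 1)] at hmain
  simp only [Int.cast_one, Nat.sub_self, pow_zero, one_mul, mul_one] at hmain
  have hee : (denom (M : SL2Z) z) ^ ((k : ℤ) + 2) *
      (denom (M : SL2Z) z) ^ ((k : ℤ) - ((k + 1 : ℕ) : ℤ) - ((k + 1 : ℕ) : ℤ)) = 1 := by
    rw [← zpow_add₀ hw]
    have h2 : ((k : ℤ) + 2) + ((k : ℤ) - ((k + 1 : ℕ) : ℤ) - ((k + 1 : ℕ) : ℤ)) = 0 := by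
      push_cast; ring
    rw [h2, zpow_zero]
  linear_combination (-(denom (M : SL2Z) z ^ ((k : ℤ) + 2))) * hmain -
    iteratedDeriv (k + 1) F (moeb (M : SL2Z) z) * hee
end
end
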